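/- Hartogs's continuation theorem: let N ≥ 1, R > 0, and 2 ≤ k ≤ N; let P := {(z¹,…,z^N) ∈ ℂ^N : |z^j| < R for all 1 ≤ j ≤ N} and A := {(z¹,…,z^N) ∈ P : z¹ = z² = ⋯ = z^k = 0}. Then for every holomorphic function f : P∖A → ℂ there exists a unique holomorphic function f̃ : P → ℂ such that f = f̃ on P∖A. (Paper's Lemma 8.3.20.) -/

import Mathlib

open Complex Metric Set Function MeasureTheory intervalIntegral
open scoped Real Topology NNReal

lemma hartogs_fderiv_bound {E : Type*} [NormedAddCommGroup E] [NormedSpace ℂ E]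
    [ProperSpace E]
    {f : E → ℂ} {S : Set E} (hS : IsOpen S) (hf : DifferentiableOn ℂ f S)
    {K : Set E} (hK : IsCompact K) (hKS : K ⊆ S) :
    ∃ C : ℝ, 0 ≤ C ∧ ∀ y ∈ K, ‖fderiv ℂ f y‖ ≤ C := by
  rcases K.eq_empty_or_nonempty with rfl | hne
  · exact ⟨0, le_refl _, by simp⟩
  obtain ⟨δ, hδ, hδK⟩ : ∃ δ > 0, Metric.thickening δ K ⊆ S :=
    hK.exists_thickening_subset_open hS hKS
  have hδ2 : (0:ℝ) < δ/2 := by positivity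
  have hcth : Metric.cthickening (δ/2) K ⊆ S :=
    (Metric.cthickening_subset_thickening' hδ (half_lt_self hδ) K).trans hδK
  have hKc : IsCompact (Metric.cthickening (δ/2) K) := hK.cthickening
  obtain ⟨M, hM⟩ : ∃ M, ∀ y ∈ Metric.cthickening (δ/2) K, ‖f y‖ ≤ M :=
    hKc.exists_bound_of_continuousOn ((hf.continuousOn).mono hcth)
  have hM0 : 0 ≤ M := by
    obtain ⟨y, hy⟩ := hne
    exact (norm_nonneg _).trans (hM y (Metric.self_subset_cthickening K hy))
  refine ⟨M / (δ/2), by positivity, fun y hy => ?_⟩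
  refine ContinuousLinearMap.opNorm_le_bound _ (by positivity) fun v => ?_
  rcases eq_or_ne v 0 with rfl | hv
  · simp
  have hvn : (0:ℝ) < ‖v‖ := norm_pos_iff.2 hv
  set r : ℝ := (δ/2) / ‖v‖ with hr
  have hrpos : 0 < r := by positivity
  set φ : ℂ → ℂ := fun t => f (y + t • v) with hφ
  have hmem' : ∀ t : ℂ, t ∈ closedBall (0:ℂ) r → y + t • v ∈ Metric.cthickening (δ/2) K := by
    intro t ht
    have hd : dist (y + t • v) y ≤ δ/2 := by
      rw [dist_eq_norm, add_sub_cancel_left, norm_smul]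
      calc ‖t‖ * ‖v‖ ≤ r * ‖v‖ := by
            apply mul_le_mul_of_nonneg_right _ (norm_nonneg v)
            simpa [Complex.dist_eq] using mem_closedBall_iff_norm.1 ht
        _ = δ/2 := by rw [hr]; field_simp
    exact (Metric.closedBall_subset_cthickening hy (δ/2)) (Metric.mem_closedBall.2 hd)
  have hmem : ∀ t : ℂ, t ∈ closedBall (0:ℂ) r → y + t • v ∈ S :=
    fun t ht => hcth (hmem' t ht)
  have hφd : DifferentiableOn ℂ φ (closedBall (0:ℂ) r) := by
    intro t ht
    have h1 : DifferentiableAt ℂ f (y + t • v) :=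
      hf.differentiableAt (hS.mem_nhds (hmem t ht))
    exact (h1.comp t (by fun_prop)).differentiableWithinAt
  have hdc : DiffContOnCl ℂ φ (ball (0:ℂ) r) := by
    apply DifferentiableOn.diffContOnCl
    rwa [closure_ball (0:ℂ) hrpos.ne']
  have hsp : ∀ t ∈ sphere (0:ℂ) r, ‖φ t‖ ≤ M := fun t ht =>
    hM _ (hmem' t (Metric.sphere_subset_closedBall ht))
  have hderiv : HasDerivAt φ (fderiv ℂ f y v) 0 := by
    have h1 : DifferentiableAt ℂ f (y + (0:ℂ) • v) := by
      refine hf.differentiableAt (hS.mem_nhds ?_)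
      exact hmem 0 (Metric.mem_closedBall_self hrpos.le)
    have h2 : HasDerivAt (fun t : ℂ => y + t • v) v 0 := by
      simpa using ((hasDerivAt_id (0:ℂ)).smul_const v).const_add y
    have h3 := h1.hasFDerivAt.comp_hasDerivAt (0:ℂ) h2
    simpa [hφ, Function.comp_def] using h3
  have hest := Complex.norm_deriv_le_of_forall_mem_sphere_norm_le hrpos hdc hsp
  rw [hderiv.deriv] at hest
  calc ‖fderiv ℂ f y v‖ ≤ M / r := hest
    _ = M / (δ/2) * ‖v‖ := by rw [hr]; field_simp

section Local
variable {N k : ℕ} {R ρ : ℝ} {i0 e1 : Fin N} {f : (Fin N → ℂ) → ℂ} {S : Set (Fin N → ℂ)}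

-- the "kill coordinate i0" continuous linear map
noncomputable def hartogsL (i0 : Fin N) : (Fin N → ℂ) →L[ℂ] (Fin N → ℂ) :=
  ContinuousLinearMap.pi (fun j => if j = i0 then 0 else ContinuousLinearMap.proj j)

lemma hartogsL_norm_le (i0 : Fin N) : ‖hartogsL i0‖ ≤ 1 := by
  refine ContinuousLinearMap.opNorm_le_bound _ zero_le_one fun w => ?_
  rw [one_mul]
  refine (pi_norm_le_iff_of_nonneg (norm_nonneg w)).2 fun j => ?_
  simp only [hartogsL, ContinuousLinearMap.pi_apply]
  by_cases hj : j = i0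
  · simp [hj]
  · simpa [hj] using norm_le_pi_norm w j

lemma hartogs_update_hasFDerivAt (i0 : Fin N) (ζ : ℂ) (x : Fin N → ℂ) :
    HasFDerivAt (fun y : Fin N → ℂ => Function.update y i0 ζ) (hartogsL i0) x := by
  rw [hartogsL]
  refine hasFDerivAt_pi.2 fun j => ?_
  by_cases hj : j = i0
  · subst hj
    simpa [Function.update_apply] using hasFDerivAt_const ζ x
  · simpa [Function.update_apply, hj] using hasFDerivAt_apply j x

lemma hartogs_update_cont (i0 : Fin N) (z : Fin N → ℂ) :
    Continuous fun ζ : ℂ => Function.update z i0 ζ := by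
  refine continuous_pi fun j => ?_
  by_cases hj : j = i0
  · simp [Function.update_apply, hj]; exact continuous_id
  · simpa [Function.update_apply, hj] using continuous_const

lemma hartogs_update_cont2 (i0 : Fin N) :
    Continuous fun p : (Fin N → ℂ) × ℂ => Function.update p.1 i0 p.2 := by
  refine continuous_pi fun j => ?_
  by_cases hj : j = i0
  · simpa [Function.update_apply, hj] using continuous_snd
  · simp only [Function.update_apply, hj, if_false]
    exact (continuous_apply j).comp continuous_fst

end Local

set_option maxHeartbeats 1000000 in
lemma hartogs_local (N kk : ℕ) (hk2 : 2 ≤ kk) (R ρ : ℝ) (hρ : 0 < ρ) (hρR : ρ < R)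
    (i0 e1 : Fin N) (hi0 : (i0 : ℕ) = 0) (he1 : (e1 : ℕ) = 1)
    (f : (Fin N → ℂ) → ℂ) {S : Set (Fin N → ℂ)}
    (hSdef : S = {z | (∀ j, ‖z j‖ < R) ∧ ∃ j : Fin N, (j : ℕ) < kk ∧ z j ≠ 0})
    (hf : DifferentiableOn ℂ f S) :
    ∃ g : (Fin N → ℂ) → ℂ,
      DifferentiableOn ℂ g {z | (∀ j, ‖z j‖ < R) ∧ ‖z i0‖ < ρ} ∧
      Set.EqOn f g ({z | (∀ j, ‖z j‖ < R) ∧ ‖z i0‖ < ρ} ∩ S) := by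
  classical
  have hi0e1 : i0 ≠ e1 := fun h => by rw [h] at hi0; omega
  have hRpos : 0 < R := hρ.trans hρR
  set U : Set (Fin N → ℂ) :=
    {z | (∀ j, ‖z j‖ < R) ∧ ‖z i0‖ < ρ} with hUdef
  -- openness
  have hP1 : IsOpen {z : Fin N → ℂ | ∀ j, ‖z j‖ < R} := by
    rw [setOf_forall]
    exact isOpen_iInter_of_finite fun j =>
      isOpen_lt (continuous_norm.comp (continuous_apply j)) continuous_const
  have hSopen : IsOpen S := by
    rw [hSdef]
    have h2 : IsOpen {z : Fin N → ℂ | ∃ j : Fin N, (j : ℕ) < kk ∧ z j ≠ 0} := by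
      rw [setOf_exists]
      refine isOpen_iUnion fun j => ?_
      by_cases hj : (j : ℕ) < kk
      · simp only [hj, true_and]
        exact isOpen_compl_singleton.preimage (continuous_apply j)
      · simp [hj]
    exact hP1.inter h2
  have hUopen : IsOpen U := by
    rw [hUdef]
    exact hP1.inter
      (isOpen_lt (continuous_norm.comp (continuous_apply i0)) continuous_const)
  have hfc : ContinuousOn f S := hf.continuousOn
  -- membership of updated points
  have hupd_mem : ∀ z : Fin N → ℂ, (∀ j, ‖z j‖ < R) →
      ∀ ζ : ℂ, ‖ζ‖ = ρ → Function.update z i0 ζ ∈ S := by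
    intro z hz ζ hζ
    rw [hSdef]
    constructor
    · intro j
      rw [Function.update_apply]
      by_cases hj : j = i0
      · simpa [hj, hζ] using hρR
      · simpa [hj] using hz j
    · refine ⟨i0, by omega, ?_⟩
      rw [Function.update_self]
      intro h0
      rw [h0] at hζ
      simp only [norm_zero] at hζ
      linarith
  -- the integrand, the extension candidate, and its derivative
  set F : (Fin N → ℂ) → ℝ → ℂ := fun z θ =>
    circleMap 0 ρ θ * I *
      ((circleMap 0 ρ θ - z i0)⁻¹ * f (Function.update z i0 (circleMap 0 ρ θ))) with hF
  set g : (Fin N → ℂ) → ℂ :=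
    fun z => (2 * π * I : ℂ)⁻¹ * ∫ θ in (0:ℝ)..2 * π, F z θ with hg
  set L : (Fin N → ℂ) →L[ℂ] (Fin N → ℂ) := hartogsL i0 with hL
  set π0 : (Fin N → ℂ) →L[ℂ] ℂ := ContinuousLinearMap.proj i0 with hπ0
  have habsc : ∀ θ : ℝ, ‖circleMap 0 ρ θ‖ = ρ := fun θ => by
    rw [norm_circleMap_zero]; exact abs_of_pos hρ
  have hsph : ∀ θ : ℝ, circleMap 0 ρ θ ∈ sphere (0:ℂ) ρ := circleMap_mem_sphere 0 hρ.le
  have hπ0le : ‖π0‖ ≤ 1 := by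
    rw [hπ0]
    refine ContinuousLinearMap.opNorm_le_bound _ zero_le_one fun w => ?_
    simpa using norm_le_pi_norm w i0
  have hFcont : ∀ x ∈ U, Continuous (F x) := by
    intro x hxU
    have h1 : Continuous fun θ => Function.update x i0 (circleMap 0 ρ θ) :=
      (hartogs_update_cont i0 x).comp (continuous_circleMap 0 ρ)
    have h2 : Continuous fun θ => f (Function.update x i0 (circleMap 0 ρ θ)) :=
      hfc.comp_continuous h1 fun θ => hupd_mem x hxU.1 _ (habsc θ)
    have h3 : Continuous fun θ => (circleMap 0 ρ θ - x i0)⁻¹ := by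
      refine Continuous.inv₀ ((continuous_circleMap 0 ρ).sub continuous_const) fun θ => ?_
      intro hcon
      have h4 := habsc θ
      rw [sub_eq_zero] at hcon
      rw [hcon] at h4
      have := hxU.2
      rw [h4] at this
      exact lt_irrefl _ this
    exact ((continuous_circleMap 0 ρ).mul continuous_const).mul (h3.mul h2)
  have hgdiff : ∀ z₀ ∈ U, DifferentiableAt ℂ g z₀ := by
    intro z₀ hz₀
    obtain ⟨ε1, hε1, hball1⟩ : ∃ ε1 > 0, closedBall z₀ ε1 ⊆ U :=
      nhds_basis_closedBall.mem_iff.1 (hUopen.mem_nhds hz₀)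
    have hz0ρ : ‖z₀ i0‖ < ρ := hz₀.2
    set ε : ℝ := min ε1 ((ρ - ‖z₀ i0‖) / 2) with hε
    have hεpos : 0 < ε := lt_min hε1 (by linarith)
    have hballU : closedBall z₀ ε ⊆ U :=
      (closedBall_subset_closedBall (min_le_left _ _)).trans hball1
    set d : ℝ := ρ - ‖z₀ i0‖ - ε with hd
    have hdpos : 0 < d := by
      have h5 : ε ≤ (ρ - ‖z₀ i0‖) / 2 := min_le_right _ _
      rw [hd]; linarith
    have hxd : ∀ x ∈ closedBall z₀ ε, ∀ ζ : ℂ, ‖ζ‖ = ρ →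
        d ≤ ‖ζ - x i0‖ := by
      intro x hx ζ hζ
      have h1 : ‖x i0 - z₀ i0‖ ≤ ε := by
        have h6 := dist_le_pi_dist x z₀ i0
        rw [Complex.dist_eq] at h6
        exact h6.trans (mem_closedBall.1 hx)
      have h2 : ‖x i0‖ ≤ ‖z₀ i0‖ + ε := by
        calc ‖x i0‖ = ‖z₀ i0 + (x i0 - z₀ i0)‖ := by ring_nf
          _ ≤ ‖z₀ i0‖ + ‖x i0 - z₀ i0‖ := norm_add_le _ _
          _ ≤ ‖z₀ i0‖ + ε := by linarith
      have h3 : ‖ζ‖ - ‖x i0‖ ≤ ‖ζ - x i0‖ := by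
        simpa using norm_sub_norm_le ζ (x i0)
      rw [hζ] at h3
      rw [hd]; linarith
    have hxne : ∀ x ∈ closedBall z₀ ε, ∀ θ : ℝ, circleMap 0 ρ θ - x i0 ≠ 0 := by
      intro x hx θ hcon
      have h7 := hxd x hx _ (habsc θ)
      rw [hcon] at h7
      simp only [norm_zero] at h7
      linarith
    set K' : Set (Fin N → ℂ) := (fun p : (Fin N → ℂ) × ℂ => Function.update p.1 i0 p.2) ''
        (closedBall z₀ ε ×ˢ sphere (0:ℂ) ρ) with hK'
    have hK'c : IsCompact K' :=
      ((isCompact_closedBall z₀ ε).prod (isCompact_sphere 0 ρ)).image (hartogs_update_cont2 i0)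
    have hK'S : K' ⊆ S := by
      rintro _ ⟨⟨x, ζ⟩, ⟨hx, hζ⟩, rfl⟩
      have hζ' : ‖ζ‖ = ρ := by
        simpa [Complex.dist_eq] using hζ
      exact hupd_mem x (fun j => (hballU hx).1 j) ζ hζ'
    have hK'mem : ∀ x ∈ closedBall z₀ ε, ∀ θ : ℝ,
        Function.update x i0 (circleMap 0 ρ θ) ∈ K' :=
      fun x hx θ => ⟨(x, circleMap 0 ρ θ), ⟨hx, hsph θ⟩, rfl⟩
    obtain ⟨Cf, hCf0, hCf⟩ := hartogs_fderiv_bound hSopen hf hK'c hK'S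
    obtain ⟨Mf, hMf⟩ := hK'c.exists_bound_of_continuousOn (hfc.mono hK'S)
    have hMf0 : 0 ≤ Mf := by
      refine le_trans (norm_nonneg _) (hMf _ (hK'mem z₀ (mem_closedBall_self hεpos.le) 0))
    set C : ℝ := ρ * (d⁻¹ * Cf + Mf * (d⁻¹ * d⁻¹)) with hC
    set F' : (Fin N → ℂ) → ℝ → ((Fin N → ℂ) →L[ℂ] ℂ) := fun x θ =>
      (circleMap 0 ρ θ * I) •
        ((circleMap 0 ρ θ - x i0)⁻¹ •
            ((fderiv ℂ f (Function.update x i0 (circleMap 0 ρ θ))).comp L)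
          + f (Function.update x i0 (circleMap 0 ρ θ)) •
            ((-((circleMap 0 ρ θ - x i0) ^ 2)⁻¹) •
              ((0 : (Fin N → ℂ) →L[ℂ] ℂ) - π0))) with hF'
    have h_diff : ∀ θ : ℝ, ∀ x ∈ ball z₀ ε, HasFDerivAt (fun y => F y θ) (F' x θ) x := by
      intro θ x hx
      have hxc : x ∈ closedBall z₀ ε := ball_subset_closedBall hx
      have hxU : x ∈ U := hballU hxc
      have hne := hxne x hxc θ
      have hSm : Function.update x i0 (circleMap 0 ρ θ) ∈ S := hupd_mem x hxU.1 _ (habsc θ)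
      have hw : HasFDerivAt (fun y : Fin N → ℂ => circleMap 0 ρ θ - y i0)
          ((0 : (Fin N → ℂ) →L[ℂ] ℂ) - π0) x :=
        (hasFDerivAt_const _ x).sub (hasFDerivAt_apply i0 x)
      have hu : HasFDerivAt (fun y : Fin N → ℂ => (circleMap 0 ρ θ - y i0)⁻¹)
          ((-((circleMap 0 ρ θ - x i0) ^ 2)⁻¹) • ((0 : (Fin N → ℂ) →L[ℂ] ℂ) - π0)) x :=
        (hasDerivAt_inv hne).comp_hasFDerivAt x hw
      have hfd : DifferentiableAt ℂ f (Function.update x i0 (circleMap 0 ρ θ)) :=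
        hf.differentiableAt (hSopen.mem_nhds hSm)
      have hv : HasFDerivAt (fun y : Fin N → ℂ => f (Function.update y i0 (circleMap 0 ρ θ)))
          ((fderiv ℂ f (Function.update x i0 (circleMap 0 ρ θ))).comp L) x :=
        hfd.hasFDerivAt.comp x (hartogs_update_hasFDerivAt i0 _ x)
      exact (hu.mul hv).const_mul (circleMap 0 ρ θ * I)
    have h_bound : ∀ θ : ℝ, ∀ x ∈ ball z₀ ε, ‖F' x θ‖ ≤ C := by
      intro θ x hx
      have hxc : x ∈ closedBall z₀ ε := ball_subset_closedBall hx
      have hge := hxd x hxc _ (habsc θ)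
      have hinv : ‖((circleMap 0 ρ θ - x i0)⁻¹ : ℂ)‖ ≤ d⁻¹ := by
        rw [norm_inv]
        exact inv_anti₀ hdpos hge
      have hA : ‖(fderiv ℂ f (Function.update x i0 (circleMap 0 ρ θ))).comp L‖ ≤ Cf := by
        refine le_trans (ContinuousLinearMap.opNorm_comp_le _ _) ?_
        calc ‖fderiv ℂ f (Function.update x i0 (circleMap 0 ρ θ))‖ * ‖L‖
            ≤ Cf * 1 := by
              refine mul_le_mul (hCf _ (hK'mem x hxc θ)) (hartogsL_norm_le i0)
                (norm_nonneg _) hCf0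
          _ = Cf := mul_one Cf
      have hc2 : ‖(-((circleMap 0 ρ θ - x i0) ^ 2)⁻¹ : ℂ)‖ ≤ d⁻¹ * d⁻¹ := by
        rw [norm_neg, norm_inv, norm_pow]
        have hsq : d * d ≤ ‖circleMap 0 ρ θ - x i0‖ *
            ‖circleMap 0 ρ θ - x i0‖ := by nlinarith
        calc (‖circleMap 0 ρ θ - x i0‖ ^ 2)⁻¹ ≤ (d * d)⁻¹ := by
              rw [sq]
              exact inv_anti₀ (by nlinarith) hsq
          _ = d⁻¹ * d⁻¹ := by rw [mul_inv]
      have hπ0' : ‖(0 : (Fin N → ℂ) →L[ℂ] ℂ) - π0‖ ≤ 1 := by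
        rw [zero_sub, norm_neg]; exact hπ0le
      have hfv : ‖f (Function.update x i0 (circleMap 0 ρ θ))‖ ≤ Mf :=
        hMf _ (hK'mem x hxc θ)
      have hX : ‖(circleMap 0 ρ θ - x i0)⁻¹ •
          ((fderiv ℂ f (Function.update x i0 (circleMap 0 ρ θ))).comp L)‖ ≤ d⁻¹ * Cf := by
        rw [norm_smul ((circleMap 0 ρ θ - x i0)⁻¹ : ℂ)
          ((fderiv ℂ f (Function.update x i0 (circleMap 0 ρ θ))).comp L)]
        exact mul_le_mul hinv hA (norm_nonneg _) (inv_nonneg.2 hdpos.le)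
      have hY : ‖f (Function.update x i0 (circleMap 0 ρ θ)) •
          ((-((circleMap 0 ρ θ - x i0) ^ 2)⁻¹) •
            ((0 : (Fin N → ℂ) →L[ℂ] ℂ) - π0))‖ ≤ Mf * (d⁻¹ * d⁻¹) := by
        rw [norm_smul (f (Function.update x i0 (circleMap 0 ρ θ)))
            ((-((circleMap 0 ρ θ - x i0) ^ 2)⁻¹ : ℂ) • ((0 : (Fin N → ℂ) →L[ℂ] ℂ) - π0)),
          norm_smul ((-((circleMap 0 ρ θ - x i0) ^ 2)⁻¹ : ℂ))
            ((0 : (Fin N → ℂ) →L[ℂ] ℂ) - π0)]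
        refine mul_le_mul hfv ?_ (by positivity) hMf0
        calc ‖(-((circleMap 0 ρ θ - x i0) ^ 2)⁻¹ : ℂ)‖ *
              ‖(0 : (Fin N → ℂ) →L[ℂ] ℂ) - π0‖
            ≤ (d⁻¹ * d⁻¹) * 1 := by
              refine mul_le_mul hc2 hπ0' (norm_nonneg _) (by positivity)
          _ = d⁻¹ * d⁻¹ := mul_one _
      have hcn : ‖(circleMap 0 ρ θ * I : ℂ)‖ = ρ := by
        rw [norm_mul, habsc, Complex.norm_I, mul_one]
      simp only [hF']
      rw [norm_smul ((circleMap 0 ρ θ * I : ℂ))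
          ((circleMap 0 ρ θ - x i0)⁻¹ •
              ((fderiv ℂ f (Function.update x i0 (circleMap 0 ρ θ))).comp L)
            + f (Function.update x i0 (circleMap 0 ρ θ)) •
              ((-((circleMap 0 ρ θ - x i0) ^ 2)⁻¹ : ℂ) •
                ((0 : (Fin N → ℂ) →L[ℂ] ℂ) - π0))), hcn, hC]
      refine le_trans (mul_le_mul_of_nonneg_left (norm_add_le _ _) hρ.le) ?_
      exact mul_le_mul_of_nonneg_left (add_le_add hX hY) hρ.le
    -- measurability data
    have hF_meas : ∀ᶠ x in 𝓝 z₀,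
        AEStronglyMeasurable (F x) (MeasureTheory.volume.restrict (Set.uIoc (0:ℝ) (2*π))) := by
      filter_upwards [hUopen.mem_nhds hz₀] with x hx
      exact (hFcont x hx).aestronglyMeasurable
    have hF_int : IntervalIntegrable (F z₀) MeasureTheory.volume 0 (2*π) :=
      (hFcont z₀ hz₀).intervalIntegrable _ _
    have hc1 : Continuous fun θ => Function.update z₀ i0 (circleMap 0 ρ θ) :=
      (hartogs_update_cont i0 z₀).comp (continuous_circleMap 0 ρ)
    have hF'_meas : AEStronglyMeasurable (F' z₀)
        (MeasureTheory.volume.restrict (Set.uIoc (0:ℝ) (2*π))) := by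
      have m1 : Measurable fun θ => fderiv ℂ f (Function.update z₀ i0 (circleMap 0 ρ θ)) :=
        (measurable_fderiv ℂ f).comp hc1.measurable
      have hcomp : Continuous fun A : (Fin N → ℂ) →L[ℂ] ℂ => A.comp L :=
        ((ContinuousLinearMap.compL ℂ (Fin N → ℂ) (Fin N → ℂ) ℂ).flip L).continuous
      have m2 : Measurable fun θ =>
          (fderiv ℂ f (Function.update z₀ i0 (circleMap 0 ρ θ))).comp L :=
        hcomp.measurable.comp m1
      have m3 : Continuous fun θ => f (Function.update z₀ i0 (circleMap 0 ρ θ)) :=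
        hfc.comp_continuous hc1 fun θ => hupd_mem z₀ hz₀.1 _ (habsc θ)
      have m4 : Continuous fun θ => ((circleMap 0 ρ θ - z₀ i0)⁻¹ : ℂ) := by
        refine Continuous.inv₀ ((continuous_circleMap 0 ρ).sub continuous_const) fun θ =>
          hxne z₀ (mem_closedBall_self hεpos.le) θ
      have m5 : Continuous fun θ => (-((circleMap 0 ρ θ - z₀ i0) ^ 2)⁻¹ : ℂ) := by
        refine Continuous.neg (Continuous.inv₀ ?_ fun θ => ?_)
        · exact (((continuous_circleMap 0 ρ).sub continuous_const).pow 2)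
        · exact pow_ne_zero _ (hxne z₀ (mem_closedBall_self hεpos.le) θ)
      have a1 : AEStronglyMeasurable (fun θ => ((circleMap 0 ρ θ - z₀ i0)⁻¹ : ℂ) •
          ((fderiv ℂ f (Function.update z₀ i0 (circleMap 0 ρ θ))).comp L))
          (MeasureTheory.volume.restrict (Set.uIoc (0:ℝ) (2*π))) :=
        m4.aestronglyMeasurable.smul m2.aestronglyMeasurable
      have a2 : AEStronglyMeasurable (fun θ => f (Function.update z₀ i0 (circleMap 0 ρ θ)) •
          ((-((circleMap 0 ρ θ - z₀ i0) ^ 2)⁻¹ : ℂ) • ((0 : (Fin N → ℂ) →L[ℂ] ℂ) - π0)))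
          (MeasureTheory.volume.restrict (Set.uIoc (0:ℝ) (2*π))) :=
        m3.aestronglyMeasurable.smul
          ((m5.aestronglyMeasurable).smul aestronglyMeasurable_const)
      exact (((continuous_circleMap 0 ρ).mul continuous_const).aestronglyMeasurable).smul
        (a1.add a2)
    have hkey := intervalIntegral.hasFDerivAt_integral_of_dominated_of_fderiv_le
      (μ := MeasureTheory.volume) (F := F) (F' := F') (x₀ := z₀) (a := 0) (b := 2*π)
      (bound := fun _ => C) (ball_mem_nhds z₀ hεpos) hF_meas hF_int hF'_meas
      (MeasureTheory.ae_of_all _ fun t _ x hx => h_bound t x hx)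
      (intervalIntegrable_const)
      (MeasureTheory.ae_of_all _ fun t _ x hx => h_diff t x hx)
    exact hkey.differentiableAt.const_mul _
  -- Cauchy formula: g = f wherever some coordinate j ≠ i0, j < kk is nonzero
  have hgf : ∀ z ∈ U, (∃ j : Fin N, j ≠ i0 ∧ (j : ℕ) < kk ∧ z j ≠ 0) → f z = g z := by
    rintro z hz ⟨j, hji0, hjk, hjz⟩
    have hF1 : DifferentiableOn ℂ (fun ζ => f (Function.update z i0 ζ))
        (closedBall (0:ℂ) ρ) := by
      intro ζ hζ
      have hζρ : ‖ζ‖ ≤ ρ := by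
        simpa [Complex.dist_eq] using mem_closedBall.1 hζ
      have hmem : Function.update z i0 ζ ∈ S := by
        rw [hSdef]
        constructor
        · intro j'
          rw [Function.update_apply]
          by_cases hj' : j' = i0
          · rw [if_pos hj']; linarith
          · rw [if_neg hj']; exact hz.1 j'
        · refine ⟨j, hjk, ?_⟩
          rwa [Function.update_apply, if_neg hji0]
      have hdiffat : DifferentiableAt ℂ f (Function.update z i0 ζ) :=
        hf.differentiableAt (hSopen.mem_nhds hmem)
      have hupd : DifferentiableAt ℂ (fun ζ : ℂ => Function.update z i0 ζ) ζ := by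
        rw [differentiableAt_pi]
        intro j'
        by_cases hj' : j' = i0
        · simp only [Function.update_apply, hj', if_pos rfl]
          exact differentiableAt_id
        · simp only [Function.update_apply, hj', if_false]
          exact differentiableAt_const _
      exact (hdiffat.comp ζ hupd).differentiableWithinAt
    have hdc : DiffContOnCl ℂ (fun ζ => f (Function.update z i0 ζ)) (ball (0:ℂ) ρ) := by
      apply DifferentiableOn.diffContOnCl
      rwa [closure_ball (0:ℂ) hρ.ne']
    have hw : z i0 ∈ ball (0:ℂ) ρ := by
      rw [mem_ball, Complex.dist_eq, sub_zero]; exact hz.2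
    have hcauchy := hdc.two_pi_i_inv_smul_circleIntegral_sub_inv_smul hw
    calc f z = f (Function.update z i0 (z i0)) := by rw [Function.update_eq_self]
      _ = (2 * π * I : ℂ)⁻¹ •
          ∮ ζ in C(0, ρ), (ζ - z i0)⁻¹ • f (Function.update z i0 ζ) := hcauchy.symm
      _ = g z := by
          rw [hg]
          simp only [hF, circleIntegral, deriv_circleMap, smul_eq_mul]
  -- EqOn on U ∩ S by a perturbation/continuity argument
  have hEq : Set.EqOn f g (U ∩ S) := by
    intro z hz
    obtain ⟨hzU, hzS⟩ := hz
    by_cases hcase : ∃ j : Fin N, j ≠ i0 ∧ (j : ℕ) < kk ∧ z j ≠ 0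
    · exact hgf z hzU hcase
    · push_neg at hcase
      have he1i0 : e1 ≠ i0 := fun h => hi0e1 h.symm
      have he1k : (e1 : ℕ) < kk := by omega
      have hze1 : z e1 = 0 := hcase e1 he1i0 he1k
      set seq : ℕ → (Fin N → ℂ) :=
        fun n => Function.update z e1 ((((1:ℝ)/(n+1) : ℝ)) : ℂ) with hseq
      have h1 : Filter.Tendsto (fun n : ℕ => ((((1:ℝ)/(n+1) : ℝ)) : ℂ))
          Filter.atTop (𝓝 0) := by
        rw [show (0:ℂ) = ((0:ℝ):ℂ) by norm_num]
        exact (Complex.continuous_ofReal.tendsto 0).comp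
          tendsto_one_div_add_atTop_nhds_zero_nat
      have hupdz : Function.update z e1 (0:ℂ) = z := by
        rw [← hze1]; exact Function.update_eq_self e1 z
      have htend : Filter.Tendsto seq Filter.atTop (𝓝 z) := by
        have h2 := ((hartogs_update_cont e1 z).tendsto 0).comp h1
        rw [hupdz] at h2
        exact h2
      have hsmall : ∀ᶠ n : ℕ in Filter.atTop, ((1:ℝ)/(n+1) : ℝ) < R := by
        have := tendsto_one_div_add_atTop_nhds_zero_nat.eventually (gt_mem_nhds hRpos)
        exact this
      have hmemseq : ∀ᶠ n in Filter.atTop, seq n ∈ U := by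
        filter_upwards [hsmall] with n hn
        have hpos : (0:ℝ) < (1:ℝ)/(n+1) := by positivity
        constructor
        · intro j'
          rw [hseq]
          simp only
          rw [Function.update_apply]
          by_cases hj' : j' = e1
          · rw [if_pos hj']
            rw [Complex.norm_real, Real.norm_eq_abs, abs_of_pos hpos]
            exact hn
          · rw [if_neg hj']; exact hzU.1 j'
        · rw [hseq]
          simp only
          rw [Function.update_apply, if_neg he1i0.symm]
          exact hzU.2
      have hfg_seq : ∀ᶠ n in Filter.atTop, f (seq n) = g (seq n) := by
        filter_upwards [hmemseq] with n hn
        refine hgf _ hn ⟨e1, he1i0, he1k, ?_⟩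
        rw [hseq]
        simp only
        rw [Function.update_self]
        have hpos : (0:ℝ) < (1:ℝ)/(n+1) := by positivity
        simp only [ne_eq, Complex.ofReal_eq_zero]
        exact ne_of_gt hpos
      have hfcont : ContinuousAt f z := hfc.continuousAt (hSopen.mem_nhds hzS)
      have hgcont : ContinuousAt g z := (hgdiff z hzU).continuousAt
      exact tendsto_nhds_unique (hfcont.tendsto.comp htend)
        (Filter.Tendsto.congr' (hfg_seq.mono fun n h => h.symm)
          (hgcont.tendsto.comp htend))
  exact ⟨g, fun z hz => (hgdiff z hz).differentiableWithinAt, hEq⟩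

set_option maxHeartbeats 1000000 in
/-- **Paper's Lemma 8.3.20 (Hartogs's continuation theorem).** Let `N ≥ 1`, `R > 0` and
`2 ≤ k ≤ N`.  Let `P` be the polydisc `{z ∈ ℂ^N : |zʲ| < R for all j}` and
`A = {z ∈ P | z¹ = ⋯ = z^k = 0}`.  Then every holomorphic function `f : P ∖ A → ℂ`
extends to a unique holomorphic function `f̃ : P → ℂ` with `f = f̃` on `P ∖ A`. -/
theorem hartogs_continuation
    (N : ℕ) (hN : 1 ≤ N) (R : ℝ) (hR : 0 < R) (k : ℕ) (hk2 : 2 ≤ k) (hkN : k ≤ N)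
    (P A : Set (Fin N → ℂ))
    (hP : P = {z : Fin N → ℂ | ∀ j, ‖z j‖ < R})
    (hA : A = {z ∈ P | ∀ j : Fin N, (j : ℕ) < k → z j = 0})
    (f : (Fin N → ℂ) → ℂ) (hf : DifferentiableOn ℂ f (P \ A)) :
    ∃ ftilde : (Fin N → ℂ) → ℂ,
      DifferentiableOn ℂ ftilde P ∧ Set.EqOn f ftilde (P \ A) ∧
      ∀ g : (Fin N → ℂ) → ℂ, DifferentiableOn ℂ g P → Set.EqOn f g (P \ A) →
        Set.EqOn ftilde g P := by
  classical
  have hN2 : 2 ≤ N := le_trans hk2 hkN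
  set i0 : Fin N := ⟨0, by omega⟩ with hi0def
  set e1 : Fin N := ⟨1, by omega⟩ with he1def
  set S : Set (Fin N → ℂ) := P \ A with hS
  have hSdef : S = {z | (∀ j, ‖z j‖ < R) ∧
      ∃ j : Fin N, (j : ℕ) < k ∧ z j ≠ 0} := by
    rw [hS, hA]
    ext z
    simp only [mem_diff, mem_setOf_eq, hP]
    constructor
    · rintro ⟨hzP, hzA⟩
      refine ⟨hzP, ?_⟩
      by_contra hc
      push_neg at hc
      exact hzA ⟨hzP, hc⟩
    · rintro ⟨hzP, j, hjk, hjz⟩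
      exact ⟨hzP, fun h => hjz (h.2 j hjk)⟩
  -- openness facts
  have hP1 : IsOpen {z : Fin N → ℂ | ∀ j, ‖z j‖ < R} := by
    rw [setOf_forall]
    exact isOpen_iInter_of_finite fun j =>
      isOpen_lt (continuous_norm.comp (continuous_apply j)) continuous_const
  have hPopen : IsOpen P := by rw [hP]; exact hP1
  have hSopen : IsOpen S := by
    rw [hSdef]
    have h2 : IsOpen {z : Fin N → ℂ | ∃ j : Fin N, (j : ℕ) < k ∧ z j ≠ 0} := by
      rw [setOf_exists]
      refine isOpen_iUnion fun j => ?_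
      by_cases hj : (j : ℕ) < k
      · simp only [hj, true_and]
        exact isOpen_compl_singleton.preimage (continuous_apply j)
      · simp [hj]
    exact hP1.inter h2
  obtain ⟨g, hgdiff, hEq⟩ := hartogs_local N k hk2 R (R/2) (by positivity) (by linarith)
    i0 e1 rfl rfl f hSdef hf
  set U : Set (Fin N → ℂ) :=
    {z | (∀ j, ‖z j‖ < R) ∧ ‖z i0‖ < R/2} with hUdef
  have hUopen : IsOpen U := by
    rw [hUdef]
    exact hP1.inter
      (isOpen_lt (continuous_norm.comp (continuous_apply i0)) continuous_const)
  have hUP : U ⊆ P := fun z hz => by rw [hP]; exact hz.1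
  set ftilde : (Fin N → ℂ) → ℂ :=
    fun z => if ∀ j : Fin N, (j : ℕ) < k → z j = 0 then g z else f z with hft
  have hoff : ∀ z, ¬(∀ j : Fin N, (j : ℕ) < k → z j = 0) → ftilde z = f z := by
    intro z h; rw [hft]; simp only [if_neg h]
  have hon : ∀ z, (∀ j : Fin N, (j : ℕ) < k → z j = 0) → ftilde z = g z := by
    intro z h; rw [hft]; simp only [if_pos h]
  have hSnotcond : ∀ z ∈ S, ¬(∀ j : Fin N, (j : ℕ) < k → z j = 0) := by
    intro z hz hc
    rw [hSdef] at hz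
    obtain ⟨_, j, hjk, hjz⟩ := hz
    exact hjz (hc j hjk)
  have hfS : Set.EqOn f ftilde (P \ A) := by
    intro z hz
    rw [hoff z (hSnotcond z (hS ▸ hz))]
  have hUg : Set.EqOn ftilde g U := by
    intro u hu
    by_cases hc : ∀ j : Fin N, (j : ℕ) < k → u j = 0
    · exact hon u hc
    · rw [hoff u hc]
      push_neg at hc
      obtain ⟨j, hjk, hju⟩ := hc
      exact hEq ⟨hu, by rw [hSdef]; exact ⟨hu.1, j, hjk, hju⟩⟩
  have hdiff : DifferentiableOn ℂ ftilde P := by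
    intro z hz
    by_cases hc : ∀ j : Fin N, (j : ℕ) < k → z j = 0
    · have hzU : z ∈ U := by
        refine ⟨by rw [hP] at hz; exact hz, ?_⟩
        have h0 : z i0 = 0 := hc i0 (by simp [hi0def]; omega)
        rw [h0]
        simp only [norm_zero]
        positivity
      have hda : DifferentiableAt ℂ ftilde z := by
        refine (hgdiff.differentiableAt (hUopen.mem_nhds hzU)).congr_of_eventuallyEq ?_
        exact Filter.eventuallyEq_of_mem (hUopen.mem_nhds hzU) hUg
      exact hda.differentiableWithinAt
    · have hzS : z ∈ S := by
        rw [hSdef]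
        push_neg at hc
        obtain ⟨j, hjk, hjz⟩ := hc
        exact ⟨by rw [hP] at hz; exact hz, j, hjk, hjz⟩
      have hda : DifferentiableAt ℂ ftilde z := by
        refine (hf.differentiableAt (hSopen.mem_nhds hzS)).congr_of_eventuallyEq ?_
        refine Filter.eventuallyEq_of_mem (hSopen.mem_nhds hzS) ?_
        intro u hu
        exact hoff u (hSnotcond u hu)
      exact hda.differentiableWithinAt
  refine ⟨ftilde, hdiff, hfS, ?_⟩
  -- uniqueness
  intro g2 hg2 hfg2
  intro z hz
  by_cases hc : ∀ j : Fin N, (j : ℕ) < k → z j = 0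
  · -- continuity + perturbation
    have hze1 : z e1 = 0 := hc e1 (by simp [he1def]; omega)
    set seq : ℕ → (Fin N → ℂ) :=
      fun n => Function.update z e1 ((((1:ℝ)/(n+1) : ℝ)) : ℂ) with hseq
    have h1 : Filter.Tendsto (fun n : ℕ => ((((1:ℝ)/(n+1) : ℝ)) : ℂ))
        Filter.atTop (𝓝 0) := by
      rw [show (0:ℂ) = ((0:ℝ):ℂ) by norm_num]
      exact (Complex.continuous_ofReal.tendsto 0).comp
        tendsto_one_div_add_atTop_nhds_zero_nat
    have hupdz : Function.update z e1 (0:ℂ) = z := by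
      rw [← hze1]; exact Function.update_eq_self e1 z
    have htend : Filter.Tendsto seq Filter.atTop (𝓝 z) := by
      have h2 := ((hartogs_update_cont e1 z).tendsto 0).comp h1
      rw [hupdz] at h2
      exact h2
    have hsmall : ∀ᶠ n : ℕ in Filter.atTop, ((1:ℝ)/(n+1) : ℝ) < R :=
      tendsto_one_div_add_atTop_nhds_zero_nat.eventually (gt_mem_nhds hR)
    have hmemseq : ∀ᶠ n in Filter.atTop, seq n ∈ P \ A := by
      filter_upwards [hsmall] with n hn
      have hpos : (0:ℝ) < (1:ℝ)/(n+1) := by positivity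
      have hseqP : seq n ∈ P := by
        rw [hP]
        intro j'
        rw [hseq]
        simp only
        rw [Function.update_apply]
        by_cases hj' : j' = e1
        · rw [if_pos hj', Complex.norm_real, Real.norm_eq_abs, abs_of_pos hpos]
          exact hn
        · rw [if_neg hj']
          rw [hP] at hz
          exact hz j'
      refine ⟨hseqP, fun hA' => ?_⟩
      rw [hA] at hA'
      have := hA'.2 e1 (by simp [he1def]; omega)
      rw [hseq] at this
      simp only at this
      rw [Function.update_self] at this
      simp only [Complex.ofReal_eq_zero] at this
      linarith
    have hftc : ContinuousAt ftilde z :=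
      (hdiff.differentiableAt (hPopen.mem_nhds hz)).continuousAt
    have hg2c : ContinuousAt g2 z :=
      (hg2.differentiableAt (hPopen.mem_nhds hz)).continuousAt
    have heq_seq : ∀ᶠ n in Filter.atTop, ftilde (seq n) = g2 (seq n) := by
      filter_upwards [hmemseq] with n hn
      rw [← hfS hn, ← hfg2 hn]
    exact tendsto_nhds_unique (hftc.tendsto.comp htend)
      (Filter.Tendsto.congr' (heq_seq.mono fun n h => h.symm)
        (hg2c.tendsto.comp htend))
  · have hzPA : z ∈ P \ A := by
      refine ⟨hz, fun hzA => ?_⟩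
      rw [hA] at hzA
      exact hc hzA.2
    rw [← hfS hzPA, ← hfg2 hzPA]
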